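/- In the quality linkage model with N agents and action profile a, for every agent i and every fixed s_{−i}, the posterior CDF (s_i, z) ↦ P(θ̄ ≤ z | S = s) is a C¹ function of (s_i, z) and satisfies ∂/∂s_i P(θ̄ ≤ z | S = s) < 0 for all (s_i, z). In the circumstance linkage model, the analogous statement holds with the common shock in place of the common type: (s_i, z) ↦ P(ε̄ ≤ z | S = s) is C¹ and ∂/∂s_i P(ε̄ ≤ z | S = s) < 0 for all (s_i, z). -/

import Mathlib

open MeasureTheory Real Filter

/-- Convolution of two densities on ℝ. -/
noncomputable def conv (f g : ℝ → ℝ) (x : ℝ) : ℝ := ∫ t, f t * g (x - t)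

/-- A probability density on ℝ that is strictly positive, `C¹` with bounded derivative,
and strictly log-concave. -/
def NiceDensity (f : ℝ → ℝ) : Prop :=
  (∀ x, 0 < f x) ∧ (∫ x, f x = 1) ∧ ContDiff ℝ 1 f ∧
    (∃ M, ∀ x, |deriv f x| ≤ M) ∧
    StrictConcaveOn ℝ Set.univ (fun x => Real.log (f x))

/-- Quality linkage model: joint weight of `(θ̄, θ⊥ᵢ)` together with the likelihood of the
outcome profile `s` at action profile `a` (outcomes `Sⱼ = θ̄ + θ⊥ⱼ + aⱼ + εⱼ`). -/
noncomputable def qWeight (fb fp fe : ℝ → ℝ) {N : ℕ} (a : Fin N → ℝ) (i : Fin N)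
    (s : Fin N → ℝ) (b t : ℝ) : ℝ :=
  fb b * fp t * fe (s i - a i - b - t) *
    ∏ j ∈ Finset.univ.erase i, conv fp fe (s j - a j - b)

/-- Quality linkage model: Bayes-rule posterior mean `E[θᵢ | S = s]` of agent `i`'s type
`θᵢ = θ̄ + θ⊥ᵢ`, conjectured action profile `a`. -/
noncomputable def qPostMean (fb fp fe : ℝ → ℝ) {N : ℕ} (a : Fin N → ℝ) (i : Fin N)
    (s : Fin N → ℝ) : ℝ :=
  (∫ b, ∫ t, (b + t) * qWeight fb fp fe a i s b t) /
    (∫ b, ∫ t, qWeight fb fp fe a i s b t)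

/-- Circumstance linkage model: joint weight of `(ε̄, θᵢ)` together with the likelihood of
the outcome profile `s` at action profile `a` (outcomes `Sⱼ = θⱼ + aⱼ + ε̄ + ε⊥ⱼ`). -/
noncomputable def cWeight (ft fb fp : ℝ → ℝ) {N : ℕ} (a : Fin N → ℝ) (i : Fin N)
    (s : Fin N → ℝ) (e t : ℝ) : ℝ :=
  fb e * ft t * fp (s i - a i - t - e) *
    ∏ j ∈ Finset.univ.erase i, conv ft fp (s j - a j - e)

/-- Circumstance linkage model: Bayes-rule posterior mean `E[θᵢ | S = s]`. -/
noncomputable def cPostMean (ft fb fp : ℝ → ℝ) {N : ℕ} (a : Fin N → ℝ) (i : Fin N)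
    (s : Fin N → ℝ) : ℝ :=
  (∫ e, ∫ t, t * cWeight ft fb fp a i s e t) /
    (∫ e, ∫ t, cWeight ft fb fp a i s e t)

/-- Quality linkage model: density of the outcome profile `S` at action profile `a`. -/
noncomputable def qDensity (fb fp fe : ℝ → ℝ) {N : ℕ} (a : Fin N → ℝ)
    (s : Fin N → ℝ) : ℝ :=
  ∫ b, fb b * ∏ j, conv fp fe (s j - a j - b)

/-- Circumstance linkage model: density of the outcome profile `S` at action profile `a`. -/
noncomputable def cDensity (ft fb fp : ℝ → ℝ) {N : ℕ} (a : Fin N → ℝ)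
    (s : Fin N → ℝ) : ℝ :=
  ∫ e, fb e * ∏ j, conv ft fp (s j - a j - e)

/-- Quality linkage model: agent `i1`'s expected value of the principal's posterior-mean
forecast of his type when the principal conjectures actions `α` and agent `i1` actually
deviates by `Δ`. -/
noncomputable def qVal (fb fp fe : ℝ → ℝ) {N : ℕ} (i1 : Fin N) (α : Fin N → ℝ)
    (Δ : ℝ) : ℝ :=
  ∫ s : Fin N → ℝ,
    qPostMean fb fp fe α i1 (Function.update s i1 (s i1 + Δ)) * qDensity fb fp fe α s

/-- Circumstance linkage model: agent `i1`'s expected value of the principal's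
posterior-mean forecast of his type when the principal conjectures actions `α` and agent
`i1` actually deviates by `Δ`. -/
noncomputable def cVal (ft fb fp : ℝ → ℝ) {N : ℕ} (i1 : Fin N) (α : Fin N → ℝ)
    (Δ : ℝ) : ℝ :=
  ∫ s : Fin N → ℝ,
    cPostMean ft fb fp α i1 (Function.update s i1 (s i1 + Δ)) * cDensity ft fb fp α s

/-- Marginal value of effort in the quality linkage model with population size `N + 1`
(agent 1 is coordinate `0`; the value of distortion does not depend on the conjectured
action profile, so the zero profile is used). -/
noncomputable def MVQ (fb fp fe : ℝ → ℝ) (N : ℕ) : ℝ :=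
  deriv (fun Δ => qVal fb fp fe (0 : Fin (N + 1)) (fun _ => 0) Δ) 0

/-- Marginal value of effort in the circumstance linkage model with population size
`N + 1`. -/
noncomputable def MVC (ft fb fp : ℝ → ℝ) (N : ℕ) : ℝ :=
  deriv (fun Δ => cVal ft fb fp (0 : Fin (N + 1)) (fun _ => 0) Δ) 0

/-- Upper Dini derivative `D⁺f(x) = limsup_{h ↓ 0} (f (x + h) − f x) / h`. -/
noncomputable def diniUpper (f : ℝ → ℝ) (x : ℝ) : ℝ :=
  Filter.limsup (fun h => (f (x + h) - f x) / h) (nhdsWithin 0 (Set.Ioi 0))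

/-- Quality linkage model: Bayes-rule posterior CDF `P(θ̄ ≤ z | S = s)` of the common type
component. -/
noncomputable def qBarCDF (fb fp fe : ℝ → ℝ) {N : ℕ} (a : Fin N → ℝ)
    (s : Fin N → ℝ) (z : ℝ) : ℝ :=
  (∫ b in Set.Iic z, fb b * ∏ j, conv fp fe (s j - a j - b)) /
    (∫ b, fb b * ∏ j, conv fp fe (s j - a j - b))

/-- Circumstance linkage model: Bayes-rule posterior CDF `P(ε̄ ≤ z | S = s)` of the common
noise component. -/
noncomputable def cBarCDF (ft fb fp : ℝ → ℝ) {N : ℕ} (a : Fin N → ℝ)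
    (s : Fin N → ℝ) (z : ℝ) : ℝ :=
  (∫ e in Set.Iic z, fb e * ∏ j, conv ft fp (s j - a j - e)) /
    (∫ e, fb e * ∏ j, conv ft fp (s j - a j - e))

namespace NiceAux

variable {f : ℝ → ℝ}

lemma pos (hf : NiceDensity f) : ∀ x, 0 < f x := hf.1

lemma contDiff (hf : NiceDensity f) : ContDiff ℝ 1 f := hf.2.2.1

lemma cont (hf : NiceDensity f) : Continuous f := hf.2.2.1.continuous

lemma integrable (hf : NiceDensity f) : Integrable f := by
  by_contra h
  have h1 := hf.2.1
  rw [MeasureTheory.integral_undef h] at h1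
  norm_num at h1

lemma derivBound (hf : NiceDensity f) : ∃ M, 0 < M ∧ ∀ x, |deriv f x| ≤ M := by
  obtain ⟨M, hM⟩ := hf.2.2.2.1
  exact ⟨M + 1, lt_of_le_of_lt ((abs_nonneg _).trans (hM 0)) (lt_add_one M),
    fun x => (hM x).trans (le_of_lt (lt_add_one M))⟩

lemma lipschitz (hf : NiceDensity f) : ∃ M : ℝ, 0 < M ∧ ∀ x y : ℝ, |f x - f y| ≤ M * |x - y| := by
  obtain ⟨M, hM0, hM⟩ := derivBound hf
  refine ⟨M, hM0, fun x y => ?_⟩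
  have hlip : LipschitzWith (Real.toNNReal M) f := by
    apply lipschitzWith_of_nnnorm_deriv_le ((contDiff hf).differentiable one_ne_zero)
    intro x
    rw [← NNReal.coe_le_coe, coe_nnnorm, Real.coe_toNNReal _ hM0.le]
    exact hM x
  have := hlip.dist_le_mul x y
  rwa [Real.dist_eq, Real.dist_eq, Real.coe_toNNReal _ hM0.le] at this

lemma bounded (hf : NiceDensity f) : ∃ B, 0 < B ∧ ∀ x, f x ≤ B := by
  obtain ⟨M, hM0, hM⟩ := lipschitz hf
  refine ⟨2 * Real.sqrt M, by positivity, fun x => ?_⟩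
  set r : ℝ := f x / (2 * M) with hr
  have hfx : 0 < f x := hf.1 x
  have hrpos : 0 < r := by positivity
  have hlow : ∀ y ∈ Set.Icc (x - r) x, f x / 2 ≤ f y := by
    intro y hy
    have h1 : |f x - f y| ≤ M * |x - y| := hM x y
    have h2 : |x - y| ≤ r := by
      rw [abs_le]; constructor <;> [linarith [hy.2]; linarith [hy.1]]
    have h3 : M * |x - y| ≤ M * r := by nlinarith
    have h4 : M * r = f x / 2 := by
      rw [hr, mul_div_assoc', mul_comm 2 M, ← div_div, mul_div_cancel_left₀ _ hM0.ne']
    have := abs_le.1 h1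
    nlinarith
  have hint : (f x / 2) * (volume (Set.Icc (x - r) x)).toReal ≤ ∫ y in Set.Icc (x - r) x, f y := by
    apply setIntegral_ge_of_const_le_real measurableSet_Icc
    · rw [Real.volume_Icc]; exact ENNReal.ofReal_ne_top
    · exact hlow
    · exact (integrable hf).integrableOn
  rw [Real.volume_Icc, ENNReal.toReal_ofReal (by linarith)] at hint
  have hle1 : ∫ y in Set.Icc (x - r) x, f y ≤ 1 := by
    rw [← hf.2.1]
    exact setIntegral_le_integral (integrable hf) (Filter.Eventually.of_forall fun y => (hf.1 y).le)
  have hxr : x - (x - r) = r := by ring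
  rw [hxr] at hint
  have hsq : f x ^ 2 ≤ 4 * M := by
    have h6 : f x / 2 * r ≤ 1 := hint.trans hle1
    rw [hr] at h6
    have h5 : f x ^ 2 / (4 * M) ≤ 1 := by
      calc f x ^ 2 / (4 * M) = f x / 2 * (f x / (2 * M)) := by ring
        _ ≤ 1 := h6
    rwa [div_le_one (by positivity)] at h5
  calc f x = Real.sqrt (f x ^ 2) := by rw [Real.sqrt_sq hfx.le]
    _ ≤ Real.sqrt (4 * M) := Real.sqrt_le_sqrt hsq
    _ = 2 * Real.sqrt M := by
        rw [show (4 : ℝ) * M = 2 ^ 2 * M by ring, Real.sqrt_mul (by positivity),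
          Real.sqrt_sq (by norm_num : (0:ℝ) ≤ 2)]

lemma two_point (hf : NiceDensity f) {r t δ : ℝ} (hrt : r < t) (hδ : 0 < δ) :
    f t * f (r - δ) < f (t - δ) * f r := by
  have hsc := hf.2.2.2.2
  set lam : ℝ := δ / (t - r + δ) with hlam
  have hden : 0 < t - r + δ := by linarith
  have hlam0 : 0 < lam := div_pos hδ hden
  have hlam1 : lam < 1 := (div_lt_one hden).2 (by linarith)
  have hml : lam * (t - r + δ) = δ := div_mul_cancel₀ _ hden.ne'
  have h1 : lam * (r - δ) + (1 - lam) * t = t - δ := by linear_combination -hml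
  have h2 : (1 - lam) * (r - δ) + lam * t = r := by linear_combination hml
  have hne : (r - δ : ℝ) ≠ t := by intro h; rw [← h] at hrt; linarith
  have k1 := hsc.2 (Set.mem_univ (r - δ)) (Set.mem_univ t) hne hlam0
    (show (0:ℝ) < 1 - lam by linarith) (by ring)
  have k2 := hsc.2 (Set.mem_univ (r - δ)) (Set.mem_univ t) hne
    (show (0:ℝ) < 1 - lam by linarith) hlam0 (by ring)
  simp only [smul_eq_mul] at k1 k2
  rw [h1] at k1
  rw [h2] at k2
  have hsum : Real.log (f (r - δ)) + Real.log (f t) < Real.log (f (t - δ)) + Real.log (f r) := by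
    linarith
  have := Real.exp_lt_exp.2 hsum
  rwa [Real.exp_add, Real.exp_add, Real.exp_log (hf.1 _), Real.exp_log (hf.1 _),
    Real.exp_log (hf.1 _), Real.exp_log (hf.1 _), mul_comm (f (r - δ))] at this

lemma deriv_mlr (hf : NiceDensity f) {p q : ℝ} (hpq : p < q) :
    deriv f q * f p < deriv f p * f q := by
  have hd : ∀ x, HasDerivAt (fun y => Real.log (f y)) (deriv f x / f x) x := fun x =>
    (((contDiff hf).differentiable one_ne_zero x).hasDerivAt).log (hf.1 x).ne'
  have anti := hf.2.2.2.2.strictAntiOn_deriv (fun x _ => (hd x).differentiableAt)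
  have h2 := anti (Set.mem_univ p) (Set.mem_univ q) hpq
  rw [(hd p).deriv, (hd q).deriv] at h2
  exact (div_lt_div_iff₀ (hf.1 q) (hf.1 p)).1 h2

lemma deriv_cont (hf : NiceDensity f) : Continuous (deriv f) :=
  (contDiff_one_iff_deriv.1 (contDiff hf)).2

end NiceAux

section SYM

lemma integral_pos_of_nonneg_of_pos_on {S : ℝ × ℝ → ℝ}
    (hS : Integrable S (volume : Measure (ℝ × ℝ))) (h0 : ∀ p, 0 ≤ S p)
    {U : Set (ℝ × ℝ)} (hU : IsOpen U) (hne : U.Nonempty)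
    (hpos : ∀ p ∈ U, 0 < S p) : 0 < ∫ p, S p := by
  rw [integral_pos_iff_support_of_nonneg h0 hS]
  exact lt_of_lt_of_le (hU.measure_pos volume hne)
    (measure_mono fun p hp => (hpos p hp).ne')

lemma sym_lt {a b c d : ℝ → ℝ}
    (ha : Integrable a) (hb : Integrable b) (hc : Integrable c) (hd : Integrable d)
    (hpt : ∀ t r : ℝ, a t * d r + a r * d t ≤ b t * c r + b r * c t)
    {U : Set (ℝ × ℝ)} (hU : IsOpen U) (hne : U.Nonempty)
    (hstrict : ∀ p ∈ U, a p.1 * d p.2 + a p.2 * d p.1 < b p.1 * c p.2 + b p.2 * c p.1) :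
    (∫ t, a t) * (∫ t, d t) < (∫ t, b t) * (∫ t, c t) := by
  have vol2 : (volume : Measure (ℝ × ℝ)) = (volume : Measure ℝ).prod volume :=
    MeasureTheory.Measure.volume_eq_prod ℝ ℝ
  have i1 : Integrable (fun p : ℝ × ℝ => a p.1 * d p.2) := by
    rw [vol2]; exact ha.mul_prod hd
  have i2 : Integrable (fun p : ℝ × ℝ => d p.1 * a p.2) := by
    rw [vol2]; exact hd.mul_prod ha
  have i3 : Integrable (fun p : ℝ × ℝ => b p.1 * c p.2) := by
    rw [vol2]; exact hb.mul_prod hc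
  have i4 : Integrable (fun p : ℝ × ℝ => c p.1 * b p.2) := by
    rw [vol2]; exact hc.mul_prod hb
  have e1 : ∫ p : ℝ × ℝ, a p.1 * d p.2 = (∫ t, a t) * (∫ t, d t) := by
    rw [vol2, integral_prod_mul]
  have e2 : ∫ p : ℝ × ℝ, d p.1 * a p.2 = (∫ t, d t) * (∫ t, a t) := by
    rw [vol2, integral_prod_mul]
  have e3 : ∫ p : ℝ × ℝ, b p.1 * c p.2 = (∫ t, b t) * (∫ t, c t) := by
    rw [vol2, integral_prod_mul]
  have e4 : ∫ p : ℝ × ℝ, c p.1 * b p.2 = (∫ t, c t) * (∫ t, b t) := by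
    rw [vol2, integral_prod_mul]
  have i12 : Integrable (fun p : ℝ × ℝ => a p.1 * d p.2 + d p.1 * a p.2) := by
    exact i1.add i2
  have i34 : Integrable (fun p : ℝ × ℝ => b p.1 * c p.2 + c p.1 * b p.2) := by
    exact i3.add i4
  have key : 0 < ∫ p : ℝ × ℝ,
      (b p.1 * c p.2 + c p.1 * b p.2 - (a p.1 * d p.2 + d p.1 * a p.2)) := by
    apply integral_pos_of_nonneg_of_pos_on
      (S := fun p : ℝ × ℝ => b p.1 * c p.2 + c p.1 * b p.2 - (a p.1 * d p.2 + d p.1 * a p.2))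
      (by exact i34.sub i12) (fun p => sub_nonneg.2 (by nlinarith [hpt p.1 p.2])) hU hne
    intro p hp
    exact sub_pos.2 (by nlinarith [hstrict p hp])
  rw [integral_sub i34 i12, integral_add i3 i4, integral_add i1 i2,
    e1, e2, e3, e4] at key
  nlinarith [key]

end SYM

section PARAM

variable {μ : Measure ℝ} {w g g' : ℝ → ℝ} {B M : ℝ}

lemma hasDerivAt_shift (hg : ∀ x, HasDerivAt g (g' x) x) (t y : ℝ) :
    HasDerivAt (fun y => g (y - t)) (g' (y - t)) y := by
  have h := (hg (y - t)).comp y ((hasDerivAt_id y).sub_const t)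
  simpa [Function.comp_def] using h

lemma param_integrand_integrable (hw : Integrable w μ) (hw0 : ∀ t, 0 ≤ w t)
    (hgc : Continuous g) (hgB : ∀ x, |g x| ≤ B) (x : ℝ) :
    Integrable (fun t => w t * g (x - t)) μ := by
  have hm : AEStronglyMeasurable (fun t => w t * g (x - t)) μ :=
    hw.aestronglyMeasurable.mul
      ((hgc.comp (continuous_const.sub continuous_id)).aestronglyMeasurable)
  apply Integrable.mono' (hw.const_mul B) hm
  refine Filter.Eventually.of_forall fun t => ?_
  show ‖w t * g (x - t)‖ ≤ B * w t
  rw [Real.norm_eq_abs, abs_mul, abs_of_nonneg (hw0 t), mul_comm B (w t)]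
  exact mul_le_mul_of_nonneg_left (hgB _) (hw0 t)

lemma param_hasDerivAt (hw : Integrable w μ) (hw0 : ∀ t, 0 ≤ w t)
    (hg : ∀ x, HasDerivAt g (g' x) x) (hgB : ∀ x, |g x| ≤ B) (hg'c : Continuous g')
    (hg'M : ∀ x, |g' x| ≤ M) (x₀ : ℝ) :
    HasDerivAt (fun x => ∫ t, w t * g (x - t) ∂μ) (∫ t, w t * g' (x₀ - t) ∂μ) x₀ := by
  have hgc : Continuous g := by
    have : Differentiable ℝ g := fun x => (hg x).differentiableAt
    exact this.continuous
  refine (hasDerivAt_integral_of_dominated_loc_of_deriv_le (s := Metric.ball x₀ 1) (Metric.ball_mem_nhds x₀ one_pos)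
    (F := fun x t => w t * g (x - t)) (F' := fun x t => w t * g' (x - t))
    (bound := fun t => M * w t) ?_ ?_ ?_ ?_ ?_ ?_).2
  · exact Filter.Eventually.of_forall fun x =>
      (param_integrand_integrable hw hw0 hgc hgB x).aestronglyMeasurable
  · exact param_integrand_integrable hw hw0 hgc hgB x₀
  · exact hw.aestronglyMeasurable.mul
      ((hg'c.comp (continuous_const.sub continuous_id)).aestronglyMeasurable)
  · refine Filter.Eventually.of_forall fun t => fun x _ => ?_
    show ‖w t * g' (x - t)‖ ≤ M * w t
    rw [Real.norm_eq_abs, abs_mul, abs_of_nonneg (hw0 t), mul_comm M (w t)]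
    exact mul_le_mul_of_nonneg_left (hg'M _) (hw0 t)
  · exact hw.const_mul M
  · exact Filter.Eventually.of_forall fun t => fun x _ =>
      (hasDerivAt_shift hg t x).const_mul (w t)

lemma param_deriv_cont (hw : Integrable w μ) (hw0 : ∀ t, 0 ≤ w t)
    (hg'c : Continuous g') (hg'M : ∀ x, |g' x| ≤ M) :
    Continuous (fun x => ∫ t, w t * g' (x - t) ∂μ) := by
  apply continuous_of_dominated (bound := fun t => M * w t)
  · exact fun x => hw.aestronglyMeasurable.mul
      ((hg'c.comp (continuous_const.sub continuous_id)).aestronglyMeasurable)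
  · refine fun x => Filter.Eventually.of_forall fun t => ?_
    show ‖w t * g' (x - t)‖ ≤ M * w t
    rw [Real.norm_eq_abs, abs_mul, abs_of_nonneg (hw0 t), mul_comm M (w t)]
    exact mul_le_mul_of_nonneg_left (hg'M _) (hw0 t)
  · exact hw.const_mul M
  · exact Filter.Eventually.of_forall fun t =>
      continuous_const.mul (hg'c.comp (continuous_id.sub continuous_const))

end PARAM
section CONV
open NiceAux

variable {fp fe : ℝ → ℝ}

/-- derivative of the convolution -/
noncomputable def convD (fp fe : ℝ → ℝ) (x : ℝ) : ℝ := ∫ t, fp t * deriv fe (x - t)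

lemma fe_hasDerivAt (he : NiceDensity fe) : ∀ x, HasDerivAt fe (deriv fe x) x :=
  fun x => ((contDiff he).differentiable one_ne_zero x).hasDerivAt

lemma conv_integrand_int (hp : NiceDensity fp) (he : NiceDensity fe) (x : ℝ) :
    Integrable (fun t => fp t * fe (x - t)) := by
  obtain ⟨B, _, hB⟩ := bounded he
  exact param_integrand_integrable (integrable hp) (fun t => (pos hp t).le) (cont he)
    (fun y => by rw [abs_of_nonneg (pos he y).le]; exact hB y) x

lemma conv_pos (hp : NiceDensity fp) (he : NiceDensity fe) (x : ℝ) :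
    0 < conv fp fe x := by
  rw [conv, integral_pos_iff_support_of_nonneg
    (fun t => (mul_pos (pos hp t) (pos he (x - t))).le) (conv_integrand_int hp he x)]
  have : Function.support (fun t => fp t * fe (x - t)) = Set.univ :=
    Set.eq_univ_of_forall fun t => (mul_pos (pos hp t) (pos he (x - t))).ne'
  rw [this]
  simp

lemma conv_le (hp : NiceDensity fp) (he : NiceDensity fe) {B : ℝ} (hB : ∀ y, fe y ≤ B)
    (x : ℝ) : conv fp fe x ≤ B := by
  have h1 : conv fp fe x ≤ ∫ t, B * fp t := by
    rw [conv]
    apply integral_mono (conv_integrand_int hp he x) ((integrable hp).const_mul B)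
    intro t
    calc fp t * fe (x - t) ≤ fp t * B :=
          mul_le_mul_of_nonneg_left (hB _) (pos hp t).le
      _ = B * fp t := mul_comm _ _
  rwa [integral_const_mul, hp.2.1, mul_one] at h1

lemma conv_hasDerivAt (hp : NiceDensity fp) (he : NiceDensity fe) (x : ℝ) :
    HasDerivAt (conv fp fe) (convD fp fe x) x := by
  obtain ⟨B, _, hB⟩ := bounded he
  obtain ⟨M, _, hM⟩ := derivBound he
  exact param_hasDerivAt (integrable hp) (fun t => (pos hp t).le) (fe_hasDerivAt he)
    (fun y => by rw [abs_of_nonneg (pos he y).le]; exact hB y) (deriv_cont he) hM x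

lemma conv_cont (hp : NiceDensity fp) (he : NiceDensity fe) : Continuous (conv fp fe) :=
  Differentiable.continuous fun x => (conv_hasDerivAt hp he x).differentiableAt

lemma convD_cont (hp : NiceDensity fp) (he : NiceDensity fe) : Continuous (convD fp fe) := by
  obtain ⟨M, _, hM⟩ := derivBound he
  exact param_deriv_cont (integrable hp) (fun t => (pos hp t).le) (deriv_cont he) hM

lemma convD_bound (hp : NiceDensity fp) (he : NiceDensity fe) {M : ℝ} (hM : ∀ y, |deriv fe y| ≤ M)
    (x : ℝ) : |convD fp fe x| ≤ M := by
  have hM0 : 0 ≤ M := (abs_nonneg _).trans (hM 0)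
  rw [convD]
  calc |∫ t, fp t * deriv fe (x - t)| ≤ ∫ t, |fp t| * |deriv fe (x - t)| := by
        simpa [abs_mul] using norm_integral_le_integral_norm (fun t => fp t * deriv fe (x - t))
    _ ≤ ∫ t, M * fp t := by
        apply integral_mono
        · simpa [abs_mul] using (param_integrand_integrable (integrable hp)
            (fun t => (pos hp t).le) (deriv_cont he) hM x).abs
        · exact (integrable hp).const_mul M
        · intro t
          show |fp t| * |deriv fe (x - t)| ≤ M * fp t
          rw [abs_of_nonneg (pos hp t).le, mul_comm M (fp t)]
          exact mul_le_mul_of_nonneg_left (hM _) (pos hp t).le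
    _ = M := by rw [integral_const_mul, hp.2.1, mul_one]

/-- Strict monotone likelihood ratio for the convolution. -/
lemma conv_mlr (hp : NiceDensity fp) (he : NiceDensity fe) {x1 x2 : ℝ} (h12 : x1 < x2) :
    convD fp fe x2 * conv fp fe x1 < convD fp fe x1 * conv fp fe x2 := by
  set δ := x2 - x1 with hδ
  have hδ0 : 0 < δ := by simp [hδ]; linarith
  obtain ⟨Be, _, hBe⟩ := bounded he
  obtain ⟨Me, _, hMe⟩ := derivBound he
  -- the four functions
  set A := fun t => fp t * deriv fe (x2 - t) with hA
  set D := fun r => fp (r - δ) * fe (x2 - r) with hD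
  set Bf := fun t => fp (t - δ) * deriv fe (x2 - t) with hBf
  set C := fun r => fp r * fe (x2 - r) with hC
  have heB : ∀ y, |fe y| ≤ Be := fun y => by rw [abs_of_nonneg (pos he y).le]; exact hBe y
  have hiA : Integrable A := param_integrand_integrable (integrable hp)
    (fun t => (pos hp t).le) (deriv_cont he) hMe x2
  have hiC : Integrable C := conv_integrand_int hp he x2
  have hiD : Integrable D := by
    have h0 : Integrable (fun r => fp r * fe (x1 - r)) := conv_integrand_int hp he x1
    have h1 : Integrable (fun r => fp (r - δ) * fe (x1 - (r - δ))) := h0.comp_sub_right δ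
    apply h1.congr
    refine Filter.Eventually.of_forall fun r => ?_
    show fp (r - δ) * fe (x1 - (r - δ)) = fp (r - δ) * fe (x2 - r)
    congr 2
    rw [hδ]; ring
  have hiB : Integrable Bf := by
    have h0 : Integrable (fun t => fp t * deriv fe (x1 - t)) :=
      param_integrand_integrable (integrable hp) (fun t => (pos hp t).le) (deriv_cont he) hMe x1
    have h1 : Integrable (fun t => fp (t - δ) * deriv fe (x1 - (t - δ))) := h0.comp_sub_right δ
    apply h1.congr
    refine Filter.Eventually.of_forall fun t => ?_
    show fp (t - δ) * deriv fe (x1 - (t - δ)) = fp (t - δ) * deriv fe (x2 - t)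
    congr 2
    rw [hδ]; ring
  -- identify the integrals
  have eA : ∫ t, A t = convD fp fe x2 := rfl
  have eC : ∫ r, C r = conv fp fe x2 := rfl
  have eD : ∫ r, D r = conv fp fe x1 := by
    have h1 : ∫ r, (fun u => fp u * fe (x1 - u)) (r - δ) = ∫ u, fp u * fe (x1 - u) :=
      integral_sub_right_eq_self (fun u => fp u * fe (x1 - u)) δ
    rw [conv, ← h1]
    congr 1
    funext r
    show fp (r - δ) * fe (x2 - r) = fp (r - δ) * fe (x1 - (r - δ))
    congr 2
    rw [hδ]; ring
  have eB : ∫ t, Bf t = convD fp fe x1 := by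
    have h1 : ∫ t, (fun u => fp u * deriv fe (x1 - u)) (t - δ) = ∫ u, fp u * deriv fe (x1 - u) :=
      integral_sub_right_eq_self (fun u => fp u * deriv fe (x1 - u)) δ
    rw [convD, ← h1]
    congr 1
    funext t
    show fp (t - δ) * deriv fe (x2 - t) = fp (t - δ) * deriv fe (x1 - (t - δ))
    congr 2
    rw [hδ]; ring
  -- pointwise inequality
  have hkey : ∀ t r : ℝ, r < t →
      0 < (fp (t - δ) * fp r - fp t * fp (r - δ)) *
        (deriv fe (x2 - t) * fe (x2 - r) - deriv fe (x2 - r) * fe (x2 - t)) := by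
    intro t r hrt
    have h1 : fp t * fp (r - δ) < fp (t - δ) * fp r := two_point hp hrt hδ0
    have h2 : deriv fe (x2 - r) * fe (x2 - t) < deriv fe (x2 - t) * fe (x2 - r) :=
      deriv_mlr he (by linarith : x2 - t < x2 - r)
    exact mul_pos (by linarith) (by linarith)
  have hpt : ∀ t r : ℝ, A t * D r + A r * D t ≤ Bf t * C r + Bf r * C t := by
    intro t r
    rcases lt_trichotomy t r with h | h | h
    · have := hkey r t h
      simp only [hA, hD, hBf, hC]
      nlinarith [hkey r t h]
    · subst h; simp only [hA, hD, hBf, hC]; exact le_of_eq (by ring)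
    · simp only [hA, hD, hBf, hC]
      nlinarith [hkey t r h]
  have final := sym_lt hiA hiB hiC hiD hpt
    (U := {p : ℝ × ℝ | p.2 < p.1}) (isOpen_lt continuous_snd continuous_fst)
    ⟨(1, 0), by norm_num⟩ ?_
  · rwa [eA, eB, eC, eD] at final
  · intro p hp'
    simp only [Set.mem_setOf_eq] at hp'
    simp only [hA, hD, hBf, hC]
    nlinarith [hkey p.1 p.2 hp']

end CONV
section PARTIALS

lemma mvt_abs {g g' : ℝ → ℝ} (hg : ∀ x, HasDerivAt g (g' x) x) (a h : ℝ) :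
    ∃ θ : ℝ, |θ - a| ≤ |h| ∧ g (a + h) - g a = g' θ * h := by
  rcases lt_trichotomy h 0 with hh | hh | hh
  · have hab : a + h < a := by linarith
    obtain ⟨c, hc, hceq⟩ := exists_hasDerivAt_eq_slope g g' hab
      (fun x _ => (hg x).continuousAt.continuousWithinAt) (fun x _ => hg x)
    refine ⟨c, ?_, ?_⟩
    · rw [abs_of_neg hh, abs_of_nonpos (by linarith [hc.2] : c - a ≤ 0)]
      linarith [hc.1]
    · have hne : a - (a + h) ≠ 0 := by intro hcon; apply absurd hcon; simp; linarith
      rw [eq_div_iff hne] at hceq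
      nlinarith [hceq]
  · exact ⟨a, by simp [hh]⟩
  · have hab : a < a + h := by linarith
    obtain ⟨c, hc, hceq⟩ := exists_hasDerivAt_eq_slope g g' hab
      (fun x _ => (hg x).continuousAt.continuousWithinAt) (fun x _ => hg x)
    refine ⟨c, ?_, ?_⟩
    · rw [abs_of_pos hh, abs_of_nonneg (by linarith [hc.1] : 0 ≤ c - a)]
      linarith [hc.2]
    · have hne : a + h - a ≠ 0 := by intro hcon; apply absurd hcon; simp; linarith
      rw [eq_div_iff hne] at hceq
      nlinarith [hceq]

lemma hasFDerivAt_of_partials {f A B : ℝ × ℝ → ℝ}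
    (hA : Continuous A) (hB : Continuous B)
    (h1 : ∀ p : ℝ × ℝ, HasDerivAt (fun x => f (x, p.2)) (A p) p.1)
    (h2 : ∀ p : ℝ × ℝ, HasDerivAt (fun z => f (p.1, z)) (B p) p.2)
    (p₀ : ℝ × ℝ) :
    HasFDerivAt f (A p₀ • ContinuousLinearMap.fst ℝ ℝ ℝ
      + B p₀ • ContinuousLinearMap.snd ℝ ℝ ℝ) p₀ := by
  rw [hasFDerivAt_iff_isLittleO_nhds_zero, Asymptotics.isLittleO_iff]
  intro ε hε
  obtain ⟨x0, z0⟩ := p₀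
  have hε2 : 0 < ε / 2 := by linarith
  obtain ⟨δ1, hδ1, hA1⟩ := Metric.continuousAt_iff.1 hA.continuousAt (ε / 2) hε2
  obtain ⟨δ2, hδ2, hB1⟩ := Metric.continuousAt_iff.1 hB.continuousAt (ε / 2) hε2
  rw [Metric.eventually_nhds_iff]
  refine ⟨min δ1 δ2, lt_min hδ1 hδ2, fun {h} hd => ?_⟩
  rw [dist_zero_right] at hd
  obtain ⟨u, v⟩ := h
  have hnorm : ‖(u, v)‖ = max |u| |v| := rfl
  have hu : |u| ≤ ‖(u, v)‖ := le_max_left _ _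
  have hv : |v| ≤ ‖(u, v)‖ := le_max_right _ _
  -- MVT in the first variable
  obtain ⟨θ1, hθ1, e1⟩ := mvt_abs (g := fun x => f (x, z0 + v))
    (g' := fun x => A (x, z0 + v)) (fun x => h1 (x, z0 + v)) x0 u
  obtain ⟨θ2, hθ2, e2⟩ := mvt_abs (g := fun z => f (x0, z))
    (g' := fun z => B (x0, z)) (fun z => h2 (x0, z)) z0 v
  have hA2 : |A (θ1, z0 + v) - A (x0, z0)| ≤ ε / 2 := by
    have hdist : dist (θ1, z0 + v) (x0, z0) < δ1 := by
      rw [Prod.dist_eq]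
      apply max_lt
      · rw [Real.dist_eq]; exact lt_of_le_of_lt (hθ1.trans hu) (hd.trans_le (min_le_left _ _))
      · rw [Real.dist_eq]
        simp only [add_sub_cancel_left]
        exact lt_of_le_of_lt hv (hd.trans_le (min_le_left _ _))
    have := hA1 hdist
    rw [Real.dist_eq] at this
    exact this.le
  have hB2 : |B (x0, θ2) - B (x0, z0)| ≤ ε / 2 := by
    have hdist : dist (x0, θ2) (x0, z0) < δ2 := by
      rw [Prod.dist_eq]
      apply max_lt
      · rw [Real.dist_eq]; simpa using hδ2
      · rw [Real.dist_eq]; exact lt_of_le_of_lt (hθ2.trans hv) (hd.trans_le (min_le_right _ _))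
    have := hB1 hdist
    rw [Real.dist_eq] at this
    exact this.le
  have decomp : f ((x0, z0) + (u, v)) - f (x0, z0) -
      (A (x0, z0) • ContinuousLinearMap.fst ℝ ℝ ℝ
        + B (x0, z0) • ContinuousLinearMap.snd ℝ ℝ ℝ) (u, v)
      = (A (θ1, z0 + v) - A (x0, z0)) * u + (B (x0, θ2) - B (x0, z0)) * v := by
    have hadd : ((x0, z0) : ℝ × ℝ) + (u, v) = (x0 + u, z0 + v) := rfl
    rw [hadd]
    simp only [ContinuousLinearMap.add_apply, ContinuousLinearMap.coe_smul',
      Pi.smul_apply, ContinuousLinearMap.coe_fst', ContinuousLinearMap.coe_snd',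
      smul_eq_mul]
    have : f (x0 + u, z0 + v) - f (x0, z0) =
        (f (x0 + u, z0 + v) - f (x0, z0 + v)) + (f (x0, z0 + v) - f (x0, z0)) := by ring
    rw [this, e1, e2]
    ring
  rw [decomp]
  calc ‖(A (θ1, z0 + v) - A (x0, z0)) * u + (B (x0, θ2) - B (x0, z0)) * v‖
      ≤ |(A (θ1, z0 + v) - A (x0, z0)) * u| + |(B (x0, θ2) - B (x0, z0)) * v| :=
        norm_add_le _ _
    _ ≤ ε / 2 * ‖(u, v)‖ + ε / 2 * ‖(u, v)‖ := by
        apply add_le_add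
        · rw [abs_mul]
          exact mul_le_mul hA2 hu (abs_nonneg _) hε2.le
        · rw [abs_mul]
          exact mul_le_mul hB2 hv (abs_nonneg _) hε2.le
    _ = ε * ‖(u, v)‖ := by ring
end PARTIALS
section CORE

lemma core {G H H' : ℝ → ℝ} {B M : ℝ}
    (hGc : Continuous G) (hGpos : ∀ b, 0 < G b) (hGi : Integrable G)
    (hH : ∀ x, HasDerivAt H (H' x) x) (hH'c : Continuous H')
    (hHpos : ∀ x, 0 < H x) (hHB : ∀ x, |H x| ≤ B) (hH'M : ∀ x, |H' x| ≤ M)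
    (hMLR : ∀ {p q : ℝ}, p < q → H' q * H p < H' p * H q) :
    ContDiff ℝ 1 (fun q : ℝ × ℝ =>
        (∫ b in Set.Iic q.2, G b * H (q.1 - b)) / (∫ b, G b * H (q.1 - b))) ∧
    (∀ y z : ℝ, HasDerivAt
        (fun x => (∫ b in Set.Iic z, G b * H (x - b)) / (∫ b, G b * H (x - b)))
        (((∫ b in Set.Iic z, G b * H' (y - b)) * (∫ b, G b * H (y - b)) -
          (∫ b in Set.Iic z, G b * H (y - b)) * (∫ b, G b * H' (y - b))) /
          (∫ b, G b * H (y - b)) ^ 2) y) ∧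
    (∀ y z : ℝ, (∫ b in Set.Iic z, G b * H' (y - b)) * (∫ b, G b * H (y - b)) -
          (∫ b in Set.Iic z, G b * H (y - b)) * (∫ b, G b * H' (y - b)) < 0) ∧
    (∀ y, 0 < ∫ b, G b * H (y - b)) := by
  have hG0 : ∀ b, 0 ≤ G b := fun b => (hGpos b).le
  have hHc : Continuous H := Differentiable.continuous fun x => (hH x).differentiableAt
  -- integrability of the basic integrands
  have iH : ∀ y : ℝ, Integrable (fun b => G b * H (y - b)) :=
    fun y => param_integrand_integrable hGi hG0 hHc hHB y
  have iH' : ∀ y : ℝ, Integrable (fun b => G b * H' (y - b)) :=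
    fun y => param_integrand_integrable hGi hG0 hH'c hH'M y
  -- positivity of the denominator
  have Dpos : ∀ y, 0 < ∫ b, G b * H (y - b) := by
    intro y
    rw [integral_pos_iff_support_of_nonneg
      (fun b => (mul_pos (hGpos b) (hHpos (y - b))).le) (iH y)]
    have : Function.support (fun b => G b * H (y - b)) = Set.univ :=
      Set.eq_univ_of_forall fun b => (mul_pos (hGpos b) (hHpos (y - b))).ne'
    rw [this]; simp
  -- x-derivative of the denominator
  have hD : ∀ y, HasDerivAt (fun x => ∫ b, G b * H (x - b))
      (∫ b, G b * H' (y - b)) y :=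
    fun y => param_hasDerivAt hGi hG0 hH hHB hH'c hH'M y
  -- x-derivative of the numerator
  have hNx : ∀ z y, HasDerivAt (fun x => ∫ b in Set.Iic z, G b * H (x - b))
      (∫ b in Set.Iic z, G b * H' (y - b)) y :=
    fun z y => param_hasDerivAt (hGi.restrict) hG0 hH hHB hH'c hH'M y
  -- z-derivative of the numerator
  have hNz : ∀ y z, HasDerivAt (fun z => ∫ b in Set.Iic z, G b * H (y - b))
      (G z * H (y - z)) z := by
    intro y z
    have hφc : Continuous (fun b => G b * H (y - b)) :=
      hGc.mul (hHc.comp (continuous_const.sub continuous_id))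
    have key : ∀ u : ℝ, ∫ b in Set.Iic u, G b * H (y - b) =
        (∫ b in Set.Iic (0:ℝ), G b * H (y - b)) + ∫ b in (0:ℝ)..u, G b * H (y - b) := by
      intro u
      have := intervalIntegral.integral_Iic_sub_Iic ((iH y).integrableOn)
        ((iH y).integrableOn) (a := (0:ℝ)) (b := u)
      linarith
    have hfun : (fun u : ℝ => ∫ b in Set.Iic u, G b * H (y - b)) =
        fun u => (∫ b in Set.Iic (0:ℝ), G b * H (y - b)) + ∫ b in (0:ℝ)..u, G b * H (y - b) :=
      funext key
    rw [hfun]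
    exact ((intervalIntegral.integral_hasDerivAt_right ((iH y).intervalIntegrable)
      (hφc.stronglyMeasurableAtFilter _ _) hφc.continuousAt)).const_add _
  -- joint continuity of the x-partial of the numerator
  have hAc : Continuous (fun p : ℝ × ℝ => ∫ b in Set.Iic p.2, G b * H' (p.1 - b)) := by
    rw [continuous_iff_continuousAt]
    intro p₀
    have heq : ∀ p : ℝ × ℝ, ∫ b in Set.Iic p.2, G b * H' (p.1 - b) =
        ∫ b, (Set.Iic p.2).indicator (fun b => G b * H' (p.1 - b)) b :=
      fun p => (integral_indicator measurableSet_Iic).symm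
    simp only [heq]
    apply continuousAt_of_dominated (bound := fun b => M * G b)
    · refine Filter.Eventually.of_forall fun p => ?_
      exact ((hGc.mul (hH'c.comp (continuous_const.sub continuous_id))).aestronglyMeasurable).indicator
        measurableSet_Iic
    · refine Filter.Eventually.of_forall fun p => Filter.Eventually.of_forall fun b => ?_
      refine le_trans (norm_indicator_le_norm_self _ _) ?_
      show ‖G b * H' (p.1 - b)‖ ≤ M * G b
      rw [Real.norm_eq_abs, abs_mul, abs_of_nonneg (hG0 b), mul_comm M (G b)]
      exact mul_le_mul_of_nonneg_left (hH'M _) (hG0 b)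
    · exact hGi.const_mul M
    · have h0 : (volume : Measure ℝ) {p₀.2} = 0 := measure_singleton _
      filter_upwards [compl_mem_ae_iff.2 h0] with b hb
      simp only [Set.mem_compl_iff, Set.mem_singleton_iff] at hb
      rcases lt_or_gt_of_ne hb with hlt | hgt
      · -- b < p₀.2 : locally the indicator is the smooth function
        have hev : ∀ᶠ p : ℝ × ℝ in nhds p₀, b < p.2 :=
          (isOpen_lt continuous_const continuous_snd).eventually_mem
            (by simpa using hlt)
        have hcont : ContinuousAt (fun p : ℝ × ℝ => G b * H' (p.1 - b)) p₀ :=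
          (continuous_const.mul (hH'c.comp (continuous_fst.sub continuous_const))).continuousAt
        apply hcont.congr
        filter_upwards [hev] with p hp
        rw [Set.indicator_of_mem (Set.mem_Iic.2 hp.le)]
      · -- p₀.2 < b : locally the indicator is 0
        have hev : ∀ᶠ p : ℝ × ℝ in nhds p₀, p.2 < b :=
          (isOpen_lt continuous_snd continuous_const).eventually_mem
            (by simpa using hgt)
        apply continuousAt_const.congr
        filter_upwards [hev] with p hp
        rw [Set.indicator_of_notMem (by simpa using not_le.2 hp)]
  -- joint continuity of the z-partial of the numerator
  have hBc : Continuous (fun p : ℝ × ℝ => G p.2 * H (p.1 - p.2)) :=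
    (hGc.comp continuous_snd).mul (hHc.comp (continuous_fst.sub continuous_snd))
  -- the numerator is C¹
  have hFD : ∀ p : ℝ × ℝ, HasFDerivAt (fun q : ℝ × ℝ => ∫ b in Set.Iic q.2, G b * H (q.1 - b))
      ((∫ b in Set.Iic p.2, G b * H' (p.1 - b)) • ContinuousLinearMap.fst ℝ ℝ ℝ
        + (G p.2 * H (p.1 - p.2)) • ContinuousLinearMap.snd ℝ ℝ ℝ) p := by
    intro p
    exact hasFDerivAt_of_partials hAc hBc (fun p => hNx p.2 p.1) (fun p => hNz p.1 p.2) p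
  have hNmC1 : ContDiff ℝ 1 (fun q : ℝ × ℝ => ∫ b in Set.Iic q.2, G b * H (q.1 - b)) := by
    rw [contDiff_one_iff_fderiv]
    refine ⟨fun p => (hFD p).differentiableAt, ?_⟩
    have : (fderiv ℝ (fun q : ℝ × ℝ => ∫ b in Set.Iic q.2, G b * H (q.1 - b))) = fun p =>
        (∫ b in Set.Iic p.2, G b * H' (p.1 - b)) • ContinuousLinearMap.fst ℝ ℝ ℝ
          + (G p.2 * H (p.1 - p.2)) • ContinuousLinearMap.snd ℝ ℝ ℝ :=
      funext fun p => (hFD p).fderiv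
    rw [this]
    exact (hAc.smul continuous_const).add (hBc.smul continuous_const)
  -- the denominator is C¹ (in x), hence jointly
  have hDC1 : ContDiff ℝ 1 (fun x : ℝ => ∫ b, G b * H (x - b)) := by
    rw [contDiff_one_iff_deriv]
    refine ⟨fun x => (hD x).differentiableAt, ?_⟩
    have : deriv (fun x : ℝ => ∫ b, G b * H (x - b)) = fun x => ∫ b, G b * H' (x - b) :=
      funext fun x => (hD x).deriv
    rw [this]
    exact param_deriv_cont hGi hG0 hH'c hH'M
  -- the strict inequality
  have hE : ∀ y z : ℝ, (∫ b in Set.Iic z, G b * H' (y - b)) * (∫ b, G b * H (y - b)) -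
      (∫ b in Set.Iic z, G b * H (y - b)) * (∫ b, G b * H' (y - b)) < 0 := by
    intro y z
    set a := (Set.Iic z).indicator (fun t => G t * H' (y - t)) with hadef
    set bb := (Set.Iic z).indicator (fun t => G t * H (y - t)) with hbdef
    set c := fun r => G r * H' (y - r) with hcdef
    set d := fun r => G r * H (y - r) with hddef
    have ia : Integrable a := (iH' y).indicator measurableSet_Iic
    have ib : Integrable bb := (iH y).indicator measurableSet_Iic
    have ea : ∫ t, a t = ∫ b in Set.Iic z, G b * H' (y - b) :=
      integral_indicator measurableSet_Iic
    have eb : ∫ t, bb t = ∫ b in Set.Iic z, G b * H (y - b) :=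
      integral_indicator measurableSet_Iic
    have hpair : ∀ t r : ℝ, t ≤ z → ¬(r ≤ z) →
        G t * H' (y - t) * (G r * H (y - r)) < G t * H (y - t) * (G r * H' (y - r)) := by
      intro t r ht hr
      have htr : y - r < y - t := by simp only [not_le] at hr; linarith
      have hm := hMLR htr
      nlinarith [mul_pos (hGpos t) (hGpos r), hm]
    have hpt : ∀ t r : ℝ, a t * d r + a r * d t ≤ bb t * c r + bb r * c t := by
      intro t r
      by_cases ht : t ≤ z <;> by_cases hr : r ≤ z <;>
        simp only [hadef, hbdef, hcdef, hddef, Set.indicator_of_mem, Set.indicator_of_notMem,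
          Set.mem_Iic, ht, hr, if_true, if_false, Set.indicator_apply, zero_mul, mul_zero,
          add_zero, zero_add, le_refl]
      · exact le_of_eq (by ring)
      · have := hpair t r ht hr
        nlinarith [this]
      · have := hpair r t hr ht
        nlinarith [this]
    have final := sym_lt ia ib ((iH' y).congr (Filter.Eventually.of_forall fun r => rfl))
      ((iH y).congr (Filter.Eventually.of_forall fun r => rfl)) hpt
      (U := {p : ℝ × ℝ | p.1 < z ∧ z < p.2})
      (IsOpen.inter (isOpen_lt continuous_fst continuous_const)
        (isOpen_lt continuous_const continuous_snd))
      ⟨(z - 1, z + 1), by constructor <;> simp <;> linarith⟩ ?_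
    · rw [ea, eb] at final
      have ecd : (∫ t, c t) = ∫ b, G b * H' (y - b) := rfl
      have edd : (∫ t, d t) = ∫ b, G b * H (y - b) := rfl
      rw [ecd, edd] at final
      linarith
    · intro p hp
      obtain ⟨h1, h2⟩ := hp
      have ht : p.1 ≤ z := le_of_lt h1
      have hr : ¬ (p.2 ≤ z) := not_le.2 h2
      have := hpair p.1 p.2 ht hr
      simp only [hadef, hbdef, hcdef, hddef, Set.indicator_of_mem, Set.indicator_of_notMem,
        Set.mem_Iic, ht, hr, Set.indicator_apply, if_true, if_false, zero_mul, mul_zero,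
        add_zero, zero_add]
      nlinarith [this]
  refine ⟨?_, ?_, hE, Dpos⟩
  · exact hNmC1.div (hDC1.comp contDiff_fst) (fun q => (Dpos q.1).ne')
  · intro y z
    exact (hNx z y).div (hD y) (Dpos y).ne'
end CORE


section MAIN
open NiceAux

lemma mainAux (fb fp fe : ℝ → ℝ) (hb : NiceDensity fb) (hp : NiceDensity fp)
    (he : NiceDensity fe) {N : ℕ} (a : Fin N → ℝ) (i : Fin N) (s : Fin N → ℝ) :
    ContDiff ℝ 1 (fun p : ℝ × ℝ => qBarCDF fb fp fe a (Function.update s i p.1) p.2) ∧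
      ∀ z : ℝ, deriv (fun x => qBarCDF fb fp fe a (Function.update s i x) z) (s i) < 0 := by
  obtain ⟨Be, hBe0, hBe⟩ := bounded he
  obtain ⟨Me, hMe0, hMe⟩ := derivBound he
  set H := conv fp fe with hHdef
  set H' := convD fp fe with hH'def
  set G := fun b => fb b * ∏ j ∈ Finset.univ.erase i, H (s j - a j - b) with hGdef
  have hHB : ∀ x, |H x| ≤ Be := fun x => by
    rw [abs_of_nonneg (conv_pos hp he x).le]; exact conv_le hp he hBe x
  have hGc : Continuous G := (cont hb).mul (continuous_finset_prod _ fun j _ =>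
    (conv_cont hp he).comp (continuous_const.sub continuous_id))
  have hGpos : ∀ b, 0 < G b := fun b =>
    mul_pos (pos hb b) (Finset.prod_pos fun j _ => conv_pos hp he _)
  have hGi : Integrable G := by
    set K := Be ^ (Finset.univ.erase i).card with hK
    have hKpos : 0 < K := pow_pos hBe0 _
    apply Integrable.mono' ((integrable hb).mul_const K)
      hGc.aestronglyMeasurable
    refine Filter.Eventually.of_forall fun b => ?_
    rw [Real.norm_eq_abs, abs_of_nonneg (hGpos b).le, hGdef]
    have : ∏ j ∈ Finset.univ.erase i, H (s j - a j - b) ≤ K := by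
      rw [hK, ← Finset.prod_const]
      exact Finset.prod_le_prod (fun j _ => (conv_pos hp he _).le)
        (fun j _ => conv_le hp he hBe _)
    exact mul_le_mul_of_nonneg_left this (pos hb b).le
  -- rewrite qBarCDF through G and H
  have hrw : ∀ x z : ℝ, qBarCDF fb fp fe a (Function.update s i x) z =
      (∫ b in Set.Iic z, G b * H (x - a i - b)) / (∫ b, G b * H (x - a i - b)) := by
    intro x z
    have hint : ∀ b : ℝ, fb b * ∏ j, conv fp fe (Function.update s i x j - a j - b) =
        G b * H (x - a i - b) := by
      intro b
      rw [← Finset.mul_prod_erase Finset.univ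
        (fun j => conv fp fe (Function.update s i x j - a j - b)) (Finset.mem_univ i)]
      have h1 : conv fp fe (Function.update s i x i - a i - b) = H (x - a i - b) := by
        rw [Function.update_self]
      have h2 : ∏ j ∈ Finset.univ.erase i, conv fp fe (Function.update s i x j - a j - b) =
          ∏ j ∈ Finset.univ.erase i, H (s j - a j - b) :=
        Finset.prod_congr rfl fun j hj => by
          rw [Function.update_of_ne (Finset.ne_of_mem_erase hj)]
      rw [h1, h2, hGdef]
      ring
    rw [qBarCDF]
    simp only [hint]
  obtain ⟨hC1, hDer, hEneg, hDpos⟩ := core (H := H) (H' := H') hGc hGpos hGi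
    (conv_hasDerivAt hp he) (convD_cont hp he) (conv_pos hp he) hHB
    (convD_bound hp he hMe) (fun {p q} hpq => conv_mlr hp he hpq)
  constructor
  · have hfun : (fun p : ℝ × ℝ => qBarCDF fb fp fe a (Function.update s i p.1) p.2) =
        (fun q : ℝ × ℝ => (∫ b in Set.Iic q.2, G b * H (q.1 - b)) /
            (∫ b, G b * H (q.1 - b))) ∘ (fun p : ℝ × ℝ => (p.1 - a i, p.2)) :=
      funext fun p => hrw p.1 p.2
    rw [hfun]
    exact hC1.comp ((contDiff_fst.sub contDiff_const).prodMk contDiff_snd)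
  · intro z
    have hfun : (fun x => qBarCDF fb fp fe a (Function.update s i x) z) =
        fun x => (∫ b in Set.Iic z, G b * H (x - a i - b)) /
          (∫ b, G b * H (x - a i - b)) := funext fun x => hrw x z
    rw [hfun]
    have h1 : HasDerivAt (fun x : ℝ => x - a i) 1 (s i) := (hasDerivAt_id _).sub_const _
    have h0 := hDer (s i - a i) z
    have hcomp := h0.comp (s i) h1
    have hcomp' : HasDerivAt (fun x : ℝ => (∫ b in Set.Iic z, G b * H (x - a i - b)) /
        (∫ b, G b * H (x - a i - b)))
        ((((∫ b in Set.Iic z, G b * H' (s i - a i - b)) * (∫ b, G b * H (s i - a i - b)) -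
          (∫ b in Set.Iic z, G b * H (s i - a i - b)) * (∫ b, G b * H' (s i - a i - b))) /
          (∫ b, G b * H (s i - a i - b)) ^ 2) * 1) (s i) := hcomp
    rw [hcomp'.deriv, mul_one]
    exact div_neg_of_neg_of_pos (hEneg (s i - a i) z) (pow_pos (hDpos _) 2)

end MAIN

/-- Paper's lemma: a higher own outcome shifts the posterior distribution of the common
component upward in the smooth first-order stochastic dominance sense: for every agent `i`
and fixed `s₋ᵢ`, the posterior CDF of the common component is a `C¹` function of
`(sᵢ, z)`, strictly decreasing in `sᵢ`; in the quality linkage model the common component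
is `θ̄`, in the circumstance linkage model it is `ε̄`. -/
theorem common_component_smooth_fosd {N : ℕ} (hN : 0 < N)
    (fθb fθp fε fθ fεb fεp : ℝ → ℝ)
    (hθb : NiceDensity fθb) (hθp : NiceDensity fθp) (hε : NiceDensity fε)
    (hθ : NiceDensity fθ) (hεb : NiceDensity fεb) (hεp : NiceDensity fεp)
    (a : Fin N → ℝ) :
    (∀ (i : Fin N) (s : Fin N → ℝ),
      ContDiff ℝ 1 (fun p : ℝ × ℝ => qBarCDF fθb fθp fε a (Function.update s i p.1) p.2) ∧
        ∀ z : ℝ,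
          deriv (fun x => qBarCDF fθb fθp fε a (Function.update s i x) z) (s i) < 0) ∧
    (∀ (i : Fin N) (s : Fin N → ℝ),
      ContDiff ℝ 1 (fun p : ℝ × ℝ => cBarCDF fθ fεb fεp a (Function.update s i p.1) p.2) ∧
        ∀ z : ℝ,
          deriv (fun x => cBarCDF fθ fεb fεp a (Function.update s i x) z) (s i) < 0) := by
  constructor
  · intro i s
    exact mainAux fθb fθp fε hθb hθp hε a i s
  · intro i s
    exact mainAux fεb fθ fεp hεb hθ hεp a i s
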